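/- Vanishing of the Pohozaev-type functional at W: for D ≥ 3, ∫₀^∞ [ (W'(r))² − W(r)^{2D/(D−2)} ] r^{D−1} dr = 0, where W(r) = (1 + r²/(D(D−2)))^{−(D−2)/2}. -/

import Mathlib

open MeasureTheory

/-- The Aubin–Talenti profile in radial coordinates. -/
noncomputable def AubinTalentiW (D : ℕ) (r : ℝ) : ℝ :=
  (1 + r ^ 2 / ((D : ℝ) * ((D : ℝ) - 2))) ^ (-(((D : ℝ) - 2) / 2))

open Real Set Filter Topology

noncomputable def ATu (D : ℕ) (r : ℝ) : ℝ := 1 + r ^ 2 / ((D : ℝ) * ((D : ℝ) - 2))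

noncomputable def ATg (D : ℕ) (r : ℝ) : ℝ :=
  (r ^ 2 / (D : ℝ) ^ 2 - 1) * ATu D r ^ (-(D : ℝ)) * r ^ ((D : ℝ) - 1)

noncomputable def ATF (D : ℕ) (r : ℝ) : ℝ :=
  -(1 / (D : ℝ)) * (r ^ ((D : ℝ)) * ATu D r ^ (1 - (D : ℝ)))

section aux
variable {D : ℕ} (hD : 3 ≤ D)
include hD

lemma hd3 : (3 : ℝ) ≤ (D : ℝ) := by exact_mod_cast hD

lemma ha_pos : 0 < (D : ℝ) * ((D : ℝ) - 2) := by
  have := hd3 hD; nlinarith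

lemma ATu_pos (r : ℝ) : 0 < ATu D r := by
  have := ha_pos hD
  have : 0 ≤ r ^ 2 / ((D : ℝ) * ((D : ℝ) - 2)) := by positivity
  unfold ATu; linarith

omit hD in
lemma hasDerivAt_ATu (r : ℝ) :
    HasDerivAt (ATu D) (2 * r / ((D : ℝ) * ((D : ℝ) - 2))) r := by
  have h := ((hasDerivAt_pow 2 r).div_const ((D : ℝ) * ((D : ℝ) - 2))).const_add 1
  refine h.congr_deriv ?_
  norm_num

lemma hasDerivAt_W (r : ℝ) :
    HasDerivAt (AubinTalentiW D) (-(r / (D : ℝ)) * ATu D r ^ (-((D : ℝ) / 2))) r := by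
  have hu := ATu_pos hD r
  have hd := hd3 hD
  have hd0 : (D : ℝ) ≠ 0 := by linarith
  have hd2 : (D : ℝ) - 2 ≠ 0 := by linarith
  have h := (hasDerivAt_ATu (D := D) r).rpow_const
    (p := -(((D : ℝ) - 2) / 2)) (Or.inl hu.ne')
  have hexp : -(((D : ℝ) - 2) / 2) - 1 = -((D : ℝ) / 2) := by ring
  rw [hexp] at h
  refine h.congr_deriv ?_
  field_simp

lemma hasDerivAt_ATF {r : ℝ} (hr : 0 < r) : HasDerivAt (ATF D) (ATg D r) r := by
  have hu := ATu_pos hD r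
  have hd := hd3 hD
  have hd0 : (D : ℝ) ≠ 0 := by linarith
  have hd2 : (D : ℝ) - 2 ≠ 0 := by linarith
  have h1 : HasDerivAt (fun x : ℝ => x ^ (D : ℝ)) ((D : ℝ) * r ^ ((D : ℝ) - 1)) r :=
    Real.hasDerivAt_rpow_const (Or.inl hr.ne')
  have h2 := (hasDerivAt_ATu (D := D) r).rpow_const
    (p := 1 - (D : ℝ)) (Or.inl hu.ne')
  have h := (h1.mul h2).const_mul (-(1 / (D : ℝ)))
  refine h.congr_deriv ?_
  have e1 : ATu D r ^ (1 - (D : ℝ)) = ATu D r * ATu D r ^ (-(D : ℝ)) := by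
    rw [show (1 : ℝ) - (D : ℝ) = 1 + (-(D : ℝ)) by ring, Real.rpow_add hu, Real.rpow_one]
  have e2 : ATu D r ^ (1 - (D : ℝ) - 1) = ATu D r ^ (-(D : ℝ)) := by
    congr 1; ring
  have e3 := (Real.rpow_add hr 1 ((D : ℝ) - 1)).symm
  rw [Real.rpow_one] at e3
  rw [show (1 : ℝ) + ((D : ℝ) - 1) = (D : ℝ) by ring] at e3
  rw [ATg, e1, e2, ← e3, ATu]
  field_simp
  ring

lemma integrand_eq {r : ℝ} (hr : r ∈ Ioi (0 : ℝ)) :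
    ((deriv (AubinTalentiW D) r) ^ 2
        - (AubinTalentiW D r) ^ ((2 * (D : ℝ)) / ((D : ℝ) - 2))) * r ^ ((D : ℝ) - 1)
      = ATg D r := by
  have hu := ATu_pos hD r
  have hd := hd3 hD
  have hd0 : (D : ℝ) ≠ 0 := by linarith
  have hd2 : (D : ℝ) - 2 ≠ 0 := by linarith
  rw [(hasDerivAt_W hD r).deriv]
  have hsq : (-(r / (D : ℝ)) * ATu D r ^ (-((D : ℝ) / 2))) ^ 2
      = r ^ 2 / (D : ℝ) ^ 2 * ATu D r ^ (-(D : ℝ)) := by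
    rw [show (-(r / (D : ℝ)) * ATu D r ^ (-((D : ℝ) / 2))) ^ 2
        = r ^ 2 / (D : ℝ) ^ 2 * (ATu D r ^ (-((D : ℝ) / 2)) * ATu D r ^ (-((D : ℝ) / 2)))
        by ring, ← Real.rpow_add hu]
    congr 2
    ring
  have hpow : (AubinTalentiW D r) ^ ((2 * (D : ℝ)) / ((D : ℝ) - 2)) = ATu D r ^ (-(D : ℝ)) := by
    show ((ATu D r) ^ (-(((D : ℝ) - 2) / 2))) ^ ((2 * (D : ℝ)) / ((D : ℝ) - 2)) = _
    rw [← Real.rpow_mul hu.le]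
    congr 1
    field_simp
  rw [hsq, hpow, ATg]
  ring

omit hD in
lemma cont_ATu : Continuous (ATu D) := by
  unfold ATu; fun_prop

lemma cont_ATg : Continuous (ATg D) := by
  have hd := hd3 hD
  have h0 : Continuous fun r : ℝ => r ^ 2 / (D : ℝ) ^ 2 - 1 := by fun_prop
  have h1 : Continuous fun r : ℝ => r ^ ((D : ℝ) - 1) :=
    Continuous.rpow_const continuous_id (fun x => Or.inr (by linarith))
  have h2 : Continuous fun r => ATu D r ^ (-(D : ℝ)) :=
    Continuous.rpow_const cont_ATu (fun x => Or.inl (ATu_pos hD x).ne')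
  exact (h0.mul h2).mul h1

omit hD in
lemma nat_sq_rpow {r : ℝ} (hr : 0 ≤ r) : r ^ 2 = r ^ ((2 : ℝ)) := by
  rw [← Real.rpow_natCast r 2]; norm_num

lemma g_integrable : IntegrableOn (ATg D) (Ioi (0 : ℝ)) := by
  have hd := hd3 hD
  have ha := ha_pos hD
  rw [← Set.Ioc_union_Ioi_eq_Ioi (by linarith : (0 : ℝ) ≤ (D : ℝ))]
  apply IntegrableOn.union
  · exact (cont_ATg hD).integrableOn_Ioc
  · have hmaj : IntegrableOn
        (fun r : ℝ => ((D : ℝ) * ((D : ℝ) - 2)) ^ ((D : ℝ)) / (D : ℝ) ^ 2 * r ^ (1 - (D : ℝ)))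
        (Ioi ((D : ℝ))) :=
      (integrableOn_Ioi_rpow_of_lt (by linarith) (by linarith)).const_mul _
    apply Integrable.mono' hmaj ((cont_ATg hD).aestronglyMeasurable.restrict)
    rw [ae_restrict_iff' measurableSet_Ioi]
    refine Eventually.of_forall fun r hr => ?_
    have hrD : (D : ℝ) < r := hr
    have hr0 : (0 : ℝ) < r := by linarith
    have hu := ATu_pos hD r
    have h1 : (1 : ℝ) ≤ r ^ 2 / (D : ℝ) ^ 2 := by
      rw [le_div_iff₀ (by positivity)]; nlinarith
    have hgnn : 0 ≤ ATg D r := by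
      unfold ATg ATu
      have h3 : (0 : ℝ) ≤ r ^ 2 / (D : ℝ) ^ 2 - 1 := by linarith
      have h4 : (0 : ℝ) < 1 + r ^ 2 / ((D : ℝ) * ((D : ℝ) - 2)) := ATu_pos hD r
      positivity
    rw [Real.norm_of_nonneg hgnn]
    have hb : ATu D r ^ (-(D : ℝ)) ≤ (r ^ 2 / ((D : ℝ) * ((D : ℝ) - 2))) ^ (-(D : ℝ)) := by
      apply Real.rpow_le_rpow_of_nonpos (by positivity) _ (by linarith)
      unfold ATu; linarith
    calc ATg D r
        ≤ r ^ 2 / (D : ℝ) ^ 2 * ((r ^ 2 / ((D : ℝ) * ((D : ℝ) - 2))) ^ (-(D : ℝ)))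
            * r ^ ((D : ℝ) - 1) := by
          unfold ATg
          have hA : (0 : ℝ) ≤ r ^ ((D : ℝ) - 1) := Real.rpow_nonneg hr0.le _
          have hB : (0 : ℝ) ≤ ATu D r ^ (-(D : ℝ)) := Real.rpow_nonneg hu.le _
          apply mul_le_mul_of_nonneg_right _ hA
          apply mul_le_mul (by linarith) hb hB (by positivity)
      _ = ((D : ℝ) * ((D : ℝ) - 2)) ^ ((D : ℝ)) / (D : ℝ) ^ 2 * r ^ (1 - (D : ℝ)) := by
          rw [nat_sq_rpow hr0.le, Real.div_rpow (by positivity) ha.le,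
            ← Real.rpow_mul hr0.le, Real.rpow_neg ha.le,
            show (1 : ℝ) - (D : ℝ) = 2 + 2 * (-(D : ℝ)) + ((D : ℝ) - 1) by ring,
            Real.rpow_add hr0, Real.rpow_add hr0]
          field_simp

lemma ATF_tendsto : Tendsto (ATF D) atTop (𝓝 0) := by
  have hd := hd3 hD
  have ha := ha_pos hD
  have key : Tendsto (fun r : ℝ => r ^ ((D : ℝ)) * ATu D r ^ (1 - (D : ℝ))) atTop (𝓝 0) := by
    apply squeeze_zero'
      (g := fun r : ℝ => ((D : ℝ) * ((D : ℝ) - 2)) ^ ((D : ℝ) - 1) * r ^ (2 - (D : ℝ)))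
    · filter_upwards [eventually_gt_atTop (0 : ℝ)] with r hr
      exact mul_nonneg (Real.rpow_nonneg hr.le _) (Real.rpow_nonneg (ATu_pos hD r).le _)
    · filter_upwards [eventually_gt_atTop (0 : ℝ)] with r hr
      have hu := ATu_pos hD r
      have hb : ATu D r ^ (1 - (D : ℝ)) ≤ (r ^ 2 / ((D : ℝ) * ((D : ℝ) - 2))) ^ (1 - (D : ℝ)) := by
        apply Real.rpow_le_rpow_of_nonpos (by positivity) _ (by linarith)
        unfold ATu; linarith
      calc r ^ ((D : ℝ)) * ATu D r ^ (1 - (D : ℝ))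
          ≤ r ^ ((D : ℝ)) * (r ^ 2 / ((D : ℝ) * ((D : ℝ) - 2))) ^ (1 - (D : ℝ)) :=
            mul_le_mul_of_nonneg_left hb (Real.rpow_nonneg hr.le _)
        _ = ((D : ℝ) * ((D : ℝ) - 2)) ^ ((D : ℝ) - 1) * r ^ (2 - (D : ℝ)) := by
            rw [nat_sq_rpow hr.le, Real.div_rpow (by positivity) ha.le,
              ← Real.rpow_mul hr.le, div_eq_mul_inv, ← Real.rpow_neg ha.le,
              show -(1 - (D : ℝ)) = (D : ℝ) - 1 by ring,
              show (2 : ℝ) - (D : ℝ) = (D : ℝ) + 2 * (1 - (D : ℝ)) by ring,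
              Real.rpow_add hr]
            ring
    · have h := (tendsto_rpow_neg_atTop (y := (D : ℝ) - 2) (by linarith)).const_mul
        (((D : ℝ) * ((D : ℝ) - 2)) ^ ((D : ℝ) - 1))
      rw [mul_zero] at h
      convert h using 2 with r
      rw [show (2 : ℝ) - (D : ℝ) = -((D : ℝ) - 2) by ring]
  have h := key.const_mul (-(1 / (D : ℝ)))
  rw [mul_zero] at h
  exact h

lemma cont_ATF : Continuous (ATF D) := by
  have hd := hd3 hD
  have h1 : Continuous fun r : ℝ => r ^ ((D : ℝ)) :=
    Continuous.rpow_const continuous_id (fun x => Or.inr (by linarith))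
  have h2 : Continuous fun r => ATu D r ^ (1 - (D : ℝ)) :=
    Continuous.rpow_const cont_ATu (fun x => Or.inl (ATu_pos hD x).ne')
  exact continuous_const.mul (h1.mul h2)

lemma ATF_zero : ATF D 0 = 0 := by
  have hd := hd3 hD
  have : ((D : ℝ)) ≠ 0 := by linarith
  simp [ATF, Real.zero_rpow this]

end aux

theorem stmt_12 (D : ℕ) (hD : 3 ≤ D) :
    ∫ r in Set.Ioi (0 : ℝ),
      ((deriv (AubinTalentiW D) r) ^ 2
        - (AubinTalentiW D r) ^ ((2 * (D : ℝ)) / ((D : ℝ) - 2))) * r ^ ((D : ℝ) - 1) = 0 := by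
  rw [setIntegral_congr_fun measurableSet_Ioi (fun r hr => integrand_eq hD hr)]
  rw [integral_Ioi_of_hasDerivAt_of_tendsto (cont_ATF hD).continuousWithinAt
    (fun x hx => hasDerivAt_ATF hD hx) (g_integrable hD) (ATF_tendsto hD)]
  rw [ATF_zero hD, sub_zero]
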